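/- Let η ∈ F₈ satisfy η³ = η + 1 (so η generates the multiplicative group F₈ˣ). Under the action of GL(3, F₂) on ℙ²(F₈), the orbits of the points [1:0:0], [1:η:0] and [1:η:η²] have cardinalities 7, 42 and 24 respectively, and every point of ℙ²(F₈) lies in exactly one of these three orbits. -/

import Mathlib

noncomputable section

abbrev F₂ : Type := ZMod 2
abbrev F₈ : Type := GaloisField 2 3

/-- The projective plane over `F₈`. -/
abbrev ProjPlane : Type := Projectivization F₈ (Fin 3 → F₈)

/-- `GL(3, F₂)` mapped into the group of `F₈`-linear automorphisms of `F₈³`,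
via the entrywise inclusion `F₂ ↪ F₈`. -/
def actHom : GL (Fin 3) F₂ →* ((Fin 3 → F₈) ≃ₗ[F₈] (Fin 3 → F₈)) :=
  ((LinearMap.GeneralLinearGroup.generalLinearEquiv F₈ (Fin 3 → F₈)).toMonoidHom.comp
      (Matrix.GeneralLinearGroup.toLin (n := Fin 3) (R := F₈)).toMonoidHom).comp
    (Units.map ((algebraMap F₂ F₈).mapMatrix).toMonoidHom)

/-- The action of `GL(3, F₂)` on the projective plane `ℙ²(F₈)`. -/
instance : MulAction (GL (Fin 3) F₂) ProjPlane where
  smul g p := p.map (actHom g).toLinearMap (actHom g).injective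
  one_smul p := by
    show p.map (actHom 1).toLinearMap (actHom 1).injective = p
    simp only [map_one]
    exact congrFun Projectivization.map_id p
  mul_smul g h p := by
    show p.map (actHom (g * h)).toLinearMap (actHom (g * h)).injective = _
    simp only [map_mul]
    exact congrFun (Projectivization.map_comp (actHom h).toLinearMap (actHom h).injective
      (actHom g).toLinearMap (actHom g).injective) p

/-- A triple with nonzero first coordinate is a nonzero vector. -/
theorem vec_ne_zero (a b c : F₈) (ha : a ≠ 0) : ![a, b, c] ≠ 0 :=
  fun h => ha (by simpa using congrFun h 0)

/-! ### Auxiliary lemmas -/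

open Projectivization MulAction

lemma F2cases (x : F₂) : x = 0 ∨ x = 1 := by revert x; decide

lemma F2ne (x : F₂) (h : x ≠ 0) : x = 1 := (F2cases x).resolve_left h

section eta
variable {η : F₈} (hη : η ^ 3 = η + 1)

lemma two_zero : (2 : F₈) = 0 := CharTwo.two_eq_zero

include hη

lemma eta_ne : η ≠ 0 := by
  intro h; rw [h] at hη
  exact (one_ne_zero : (1 : F₈) ≠ 0) (by linear_combination -hη)

lemma eta4 : η ^ 4 = η ^ 2 + η := by linear_combination η * hη
lemma eta5 : η ^ 5 = η ^ 2 + η + 1 := by linear_combination (η ^ 2 + 1) * hη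
lemma eta6 : η ^ 6 = η ^ 2 + 1 := by
  linear_combination (η ^ 3 + η + 1) * hη + η * (two_zero)

/-- Linear independence of `1, η, η²` over `F₂`. -/
lemma indep (a b c : F₂)
    (h : algebraMap F₂ F₈ a + algebraMap F₂ F₈ b * η + algebraMap F₂ F₈ c * η ^ 2 = 0) :
    a = 0 ∧ b = 0 ∧ c = 0 := by
  have hne : η ≠ 0 := eta_ne hη
  rcases F2cases a with rfl | rfl <;> rcases F2cases b with rfl | rfl <;>
      rcases F2cases c with rfl | rfl <;>
    simp only [map_zero, _root_.map_one, zero_mul, one_mul, zero_add, add_zero] at h <;>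
    [skip; skip; skip; skip; skip; skip; skip; skip]
  · exact ⟨rfl, rfl, rfl⟩
  · exact absurd h (pow_ne_zero 2 hne)
  · exact absurd h hne
  · exfalso; apply pow_ne_zero 4 hne; rw [eta4 hη]; linear_combination h
  · exact absurd h one_ne_zero
  · exfalso; apply pow_ne_zero 6 hne; rw [eta6 hη]; linear_combination h
  · exfalso; apply pow_ne_zero 3 hne; rw [hη]; linear_combination h
  · exfalso; apply pow_ne_zero 5 hne; rw [eta5 hη]; linear_combination h

end eta

/-! ### Generic facts about the action -/

lemma vec_ext (u v : Fin 3 → F₈) (h0 : u 0 = v 0) (h1 : u 1 = v 1) (h2 : u 2 = v 2) :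
    u = v := by
  funext i
  match i with
  | ⟨0, _⟩ => exact h0
  | ⟨1, _⟩ => exact h1
  | ⟨2, _⟩ => exact h2

lemma smul_mk (g : GL (Fin 3) F₂) (v : Fin 3 → F₈) (hv : v ≠ 0)
    (hv' : (g.val.map (algebraMap F₂ F₈)).mulVec v ≠ 0) :
    g • (Projectivization.mk F₈ v hv) =
      Projectivization.mk F₈ ((g.val.map (algebraMap F₂ F₈)).mulVec v) hv' := by
  show (Projectivization.mk F₈ v hv).map (actHom g).toLinearMap (actHom g).injective = _
  rw [Projectivization.map_mk]
  rfl

lemma mulVec_ne_zero (g : GL (Fin 3) F₂) (v : Fin 3 → F₈) (hv : v ≠ 0) :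
    (g.val.map (algebraMap F₂ F₈)).mulVec v ≠ 0 := by
  intro h
  exact hv ((actHom g).map_eq_zero_iff.1 h)

lemma mulVec3 (M : Matrix (Fin 3) (Fin 3) F₈) (v : Fin 3 → F₈) (i : Fin 3) :
    M.mulVec v i = M i 0 * v 0 + M i 1 * v 1 + M i 2 * v 2 := by
  simp [Matrix.mulVec, dotProduct, Fin.sum_univ_three]

lemma smul_mk_eq_iff (g : GL (Fin 3) F₂) (v : Fin 3 → F₈) (hv : v ≠ 0) :
    g ∈ MulAction.stabilizer (GL (Fin 3) F₂) (Projectivization.mk F₈ v hv) ↔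
      ∃ a : F₈ˣ, a • v = (g.val.map (algebraMap F₂ F₈)).mulVec v := by
  rw [MulAction.mem_stabilizer_iff, smul_mk g v hv (mulVec_ne_zero g v hv),
    Projectivization.mk_eq_mk_iff]

lemma finj : Function.Injective (algebraMap F₂ F₈) := (algebraMap F₂ F₈).injective

lemma f_eq_zero {x : F₂} (h : algebraMap F₂ F₈ x = 0) : x = 0 := finj (by simpa using h)

/-! ### Stabilizer characterizations -/

section stab

variable {η : F₈} (hη : η ^ 3 = η + 1)

/-- Stabilizer of `[1:0:0]`. -/
lemma stab1_iff (g : GL (Fin 3) F₂) :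
    g ∈ MulAction.stabilizer (GL (Fin 3) F₂)
        (Projectivization.mk F₈ ![1, 0, 0] (vec_ne_zero 1 0 0 one_ne_zero)) ↔
      (g.val 0 0 = 1 ∧ g.val 1 0 = 0 ∧ g.val 2 0 = 0) := by
  rw [smul_mk_eq_iff]
  set f := algebraMap F₂ F₈ with hf
  constructor
  · rintro ⟨a, ha⟩
    have h0 := congrFun ha 0
    have h1 := congrFun ha 1
    have h2 := congrFun ha 2
    simp only [Pi.smul_apply, Units.smul_def, smul_eq_mul, mulVec3, Matrix.map_apply,
      Matrix.cons_val_zero, Matrix.cons_val_one, Matrix.head_cons, Matrix.cons_val_two,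
      Matrix.tail_cons, mul_one, mul_zero, add_zero, zero_add] at h0 h1 h2
    refine ⟨?_, f_eq_zero h1.symm, f_eq_zero h2.symm⟩
    apply F2ne
    intro hz
    rw [hz] at h0
    exact a.ne_zero (by simpa [hf] using h0)
  · rintro ⟨h1, h2, h3⟩
    refine ⟨1, ?_⟩
    apply vec_ext <;>
      simp [mulVec3, h1, h2, h3]

include hη

/-- Stabilizer of `[1:η:0]`. -/
lemma stab2_iff (g : GL (Fin 3) F₂) :
    g ∈ MulAction.stabilizer (GL (Fin 3) F₂)
        (Projectivization.mk F₈ ![1, η, 0] (vec_ne_zero 1 η 0 one_ne_zero)) ↔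
      (g.val 0 0 = 1 ∧ g.val 0 1 = 0 ∧ g.val 1 0 = 0 ∧ g.val 1 1 = 1 ∧
        g.val 2 0 = 0 ∧ g.val 2 1 = 0) := by
  rw [smul_mk_eq_iff]
  set f := algebraMap F₂ F₈ with hf
  constructor
  · rintro ⟨a, ha⟩
    have h0 := congrFun ha 0
    have h1 := congrFun ha 1
    have h2 := congrFun ha 2
    simp only [Pi.smul_apply, Units.smul_def, smul_eq_mul, mulVec3, Matrix.map_apply,
      Matrix.cons_val_zero, Matrix.cons_val_one, Matrix.head_cons, Matrix.cons_val_two,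
      Matrix.tail_cons, mul_one, mul_zero, add_zero, zero_add] at h0 h1 h2
    obtain ⟨e1, e2, -⟩ := indep hη (g.val 2 0) (g.val 2 1) 0
      (by rw [map_zero, zero_mul, add_zero]; linear_combination -h2)
    obtain ⟨e3, e4, e5⟩ := indep hη (g.val 1 0) (g.val 1 1 - g.val 0 0) (- g.val 0 1)
      (by rw [map_sub, map_neg]; linear_combination h0 * η - h1)
    have e6 : g.val 0 1 = 0 := by rwa [neg_eq_zero] at e5
    have e7 : g.val 0 0 = 1 := by
      apply F2ne
      intro hz
      apply a.ne_zero
      have h0' := h0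
      rw [hz, e6] at h0'
      simpa [hf] using h0'
    have e8 : g.val 1 1 = 1 := by rwa [sub_eq_zero, e7] at e4
    exact ⟨e7, e6, e3, e8, e1, e2⟩
  · rintro ⟨h1, h2, h3, h4, h5, h6⟩
    refine ⟨1, ?_⟩
    apply vec_ext <;>
      simp [mulVec3, h1, h2, h3, h4, h5, h6]

/-- Stabilizer of `[1:η:η²]`. -/
lemma stab3_iff (g : GL (Fin 3) F₂) :
    g ∈ MulAction.stabilizer (GL (Fin 3) F₂)
        (Projectivization.mk F₈ ![1, η, η ^ 2] (vec_ne_zero 1 η (η ^ 2) one_ne_zero)) ↔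
      (g.val 1 0 = g.val 0 2 ∧ g.val 1 1 = g.val 0 0 + g.val 0 2 ∧ g.val 1 2 = g.val 0 1 ∧
        g.val 2 0 = g.val 0 1 ∧ g.val 2 1 = g.val 0 1 + g.val 0 2 ∧
        g.val 2 2 = g.val 0 0 + g.val 0 2) := by
  rw [smul_mk_eq_iff]
  set f := algebraMap F₂ F₈ with hf
  constructor
  · rintro ⟨a, ha⟩
    have h0 := congrFun ha 0
    have h1 := congrFun ha 1
    have h2 := congrFun ha 2
    simp only [Pi.smul_apply, Units.smul_def, smul_eq_mul, mulVec3, Matrix.map_apply,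
      Matrix.cons_val_zero, Matrix.cons_val_one, Matrix.head_cons, Matrix.cons_val_two,
      Matrix.tail_cons, mul_one, mul_zero, add_zero, zero_add] at h0 h1 h2
    obtain ⟨e1, e2, e3⟩ := indep hη (g.val 1 0 - g.val 0 2)
      (g.val 1 1 - g.val 0 0 - g.val 0 2) (g.val 1 2 - g.val 0 1)
      (by
        simp only [map_sub]
        linear_combination h0 * η - h1 + f (g.val 0 2) * hη)
    obtain ⟨e4, e5, e6⟩ := indep hη (g.val 2 0 - g.val 0 1)
      (g.val 2 1 - g.val 0 1 - g.val 0 2) (g.val 2 2 - g.val 0 0 - g.val 0 2)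
      (by
        simp only [map_sub]
        linear_combination h0 * η ^ 2 - h2 + (f (g.val 0 1) + f (g.val 0 2) * η) * hη)
    refine ⟨by rwa [sub_eq_zero] at e1, ?_, by rwa [sub_eq_zero] at e3,
      by rwa [sub_eq_zero] at e4, ?_, ?_⟩
    · have := e2; rw [sub_sub, sub_eq_zero] at this; exact this
    · have := e5; rw [sub_sub, sub_eq_zero] at this; exact this
    · have := e6; rw [sub_sub, sub_eq_zero] at this; exact this
  · rintro ⟨h1, h2, h3, h4, h5, h6⟩
    have hva : f (g.val 0 0) + f (g.val 0 1) * η + f (g.val 0 2) * η ^ 2 ≠ 0 := by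
      intro hz
      obtain ⟨z1, z2, z3⟩ := indep hη _ _ _ hz
      have hdet : g.val.det = 0 := by
        apply Matrix.det_eq_zero_of_row_eq_zero 0
        intro j
        fin_cases j <;> assumption
      have hu : IsUnit g.val.det := (Matrix.isUnit_iff_isUnit_det _).1 g.isUnit
      rw [hdet] at hu
      exact hu.ne_zero rfl
    refine ⟨Units.mk0 _ hva, ?_⟩
    apply vec_ext <;>
      simp only [Pi.smul_apply, Units.smul_def, smul_eq_mul, Units.val_mk0, mulVec3,
        Matrix.map_apply, Matrix.cons_val_zero, Matrix.cons_val_one, Matrix.head_cons,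
        Matrix.cons_val_two, Matrix.tail_cons, mul_one, mul_zero, add_zero, zero_add] <;>
      simp only [h1, h2, h3, h4, h5, h6, map_add]
    · linear_combination f (g.val 0 2) * hη
    · linear_combination (f (g.val 0 1) + f (g.val 0 2) * η) * hη

end stab

/-! ### Counting -/

/-- A stabilizer with an entrywise characterization is equivalent to a set of matrices. -/
def stabMatEquiv (p : ProjPlane) (P : Matrix (Fin 3) (Fin 3) F₂ → Prop)
    (h : ∀ g : GL (Fin 3) F₂, g ∈ MulAction.stabilizer (GL (Fin 3) F₂) p ↔ P g.val) :
    MulAction.stabilizer (GL (Fin 3) F₂) p ≃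
      {m : Matrix (Fin 3) (Fin 3) F₂ // m.det ≠ 0 ∧ P m} where
  toFun g := ⟨g.val.val, ⟨by
      have hu : IsUnit (g.val.val).det := (Matrix.isUnit_iff_isUnit_det _).1 g.val.isUnit
      intro hz
      rw [hz] at hu
      exact hu.ne_zero rfl,
    (h g.val).1 g.2⟩⟩
  invFun m := ⟨Matrix.GeneralLinearGroup.mkOfDetNeZero m.val m.2.1, (h _).2 m.2.2⟩
  left_inv g := Subtype.ext (Units.ext rfl)
  right_inv m := Subtype.ext rfl

lemma count1 : Fintype.card {m : Matrix (Fin 3) (Fin 3) F₂ //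
    m.det ≠ 0 ∧ (m 0 0 = 1 ∧ m 1 0 = 0 ∧ m 2 0 = 0)} = 24 := by decide

lemma count2 : Fintype.card {m : Matrix (Fin 3) (Fin 3) F₂ //
    m.det ≠ 0 ∧ (m 0 0 = 1 ∧ m 0 1 = 0 ∧ m 1 0 = 0 ∧ m 1 1 = 1 ∧
      m 2 0 = 0 ∧ m 2 1 = 0)} = 4 := by decide

lemma count3 : Fintype.card {m : Matrix (Fin 3) (Fin 3) F₂ //
    m.det ≠ 0 ∧ (m 1 0 = m 0 2 ∧ m 1 1 = m 0 0 + m 0 2 ∧ m 1 2 = m 0 1 ∧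
      m 2 0 = m 0 1 ∧ m 2 1 = m 0 1 + m 0 2 ∧ m 2 2 = m 0 0 + m 0 2)} = 7 := by decide

lemma cardGL : Nat.card (GL (Fin 3) F₂) = 168 := by
  rw [Matrix.card_GL_field]
  simp [Fin.prod_univ_three, ZMod.card]

/-! ### Cardinality of the projective plane -/

instance : Finite ProjPlane :=
  (Quotient.finite _ : Finite (Quotient (projectivizationSetoid F₈ (Fin 3 → F₈))))

/-- Normal-form data for a point of the projective plane. -/
abbrev normTarget : Type := (F₈ × F₈) ⊕ (F₈ ⊕ PUnit)

open scoped Classical in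
def normFun : {v : Fin 3 → F₈ // v ≠ 0} → normTarget := fun v =>
  if h0 : v.1 0 ≠ 0 then .inl ((v.1 0)⁻¹ * v.1 1, (v.1 0)⁻¹ * v.1 2)
  else if h1 : v.1 1 ≠ 0 then .inr (.inl ((v.1 1)⁻¹ * v.1 2))
  else .inr (.inr PUnit.unit)

lemma normFun_smul (a b : {v : Fin 3 → F₈ // v ≠ 0}) (t : F₈) (h : (a : Fin 3 → F₈) = t • b.1) :
    normFun a = normFun b := by
  classical
  have ht : t ≠ 0 := by
    rintro rfl
    exact a.2 (by simpa using h)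
  have h0 := congrFun h 0
  have h1 := congrFun h 1
  have h2 := congrFun h 2
  simp only [Pi.smul_apply, smul_eq_mul] at h0 h1 h2
  unfold normFun
  rcases em (b.1 0 = 0) with hb0 | hb0
  · rw [dif_neg (show ¬(a.1 0 ≠ 0) by simp [h0, hb0]),
      dif_neg (show ¬(b.1 0 ≠ 0) by simp [hb0])]
    rcases em (b.1 1 = 0) with hb1 | hb1
    · rw [dif_neg (show ¬(a.1 1 ≠ 0) by simp [h1, hb1]),
        dif_neg (show ¬(b.1 1 ≠ 0) by simp [hb1])]
    · rw [dif_pos (show a.1 1 ≠ 0 by rw [h1]; exact mul_ne_zero ht hb1), dif_pos hb1,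
        h1, h2, mul_inv_rev, mul_assoc, inv_mul_cancel_left₀ ht]
  · rw [dif_pos (show a.1 0 ≠ 0 by rw [h0]; exact mul_ne_zero ht hb0), dif_pos hb0,
      h0, h1, h2, mul_inv_rev, mul_assoc, inv_mul_cancel_left₀ ht, mul_assoc,
      inv_mul_cancel_left₀ ht]

def projCount : ProjPlane → normTarget :=
  Projectivization.lift normFun normFun_smul

def projEquiv : ProjPlane ≃ normTarget where
  toFun := projCount
  invFun x :=
    match x with
    | .inl (b, c) => Projectivization.mk F₈ ![1, b, c] (vec_ne_zero 1 b c one_ne_zero)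
    | .inr (.inl c) => Projectivization.mk F₈ ![0, 1, c]
        (fun h => (one_ne_zero : (1 : F₈) ≠ 0) (by simpa using congrFun h 1))
    | .inr (.inr _) => Projectivization.mk F₈ ![0, 0, 1]
        (fun h => (one_ne_zero : (1 : F₈) ≠ 0) (by simpa using congrFun h 2))
  left_inv p := by
    induction p using Projectivization.ind with
    | h v hv =>
      show _ = Projectivization.mk F₈ v hv
      have : projCount (Projectivization.mk F₈ v hv) = normFun ⟨v, hv⟩ := rfl
      rw [this]
      unfold normFun
      by_cases h0 : v 0 ≠ 0
      · rw [dif_pos h0]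
        show Projectivization.mk F₈ ![1, (v 0)⁻¹ * v 1, (v 0)⁻¹ * v 2] _ = _
        rw [Projectivization.mk_eq_mk_iff']
        refine ⟨(v 0)⁻¹, ?_⟩
        apply vec_ext <;> simp [inv_mul_cancel₀ h0]
      · push_neg at h0
        rw [dif_neg (by simp [h0])]
        by_cases h1 : v 1 ≠ 0
        · rw [dif_pos h1]
          show Projectivization.mk F₈ ![0, 1, (v 1)⁻¹ * v 2] _ = _
          rw [Projectivization.mk_eq_mk_iff']
          refine ⟨(v 1)⁻¹, ?_⟩
          apply vec_ext <;> simp [h0, inv_mul_cancel₀ h1]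
        · push_neg at h1
          rw [dif_neg (by simp [h1])]
          have h2 : v 2 ≠ 0 := by
            intro h2
            exact hv (vec_ext v 0 h0 h1 h2)
          show Projectivization.mk F₈ ![0, 0, 1] _ = _
          rw [Projectivization.mk_eq_mk_iff']
          refine ⟨(v 2)⁻¹, ?_⟩
          apply vec_ext <;> simp [h0, h1, inv_mul_cancel₀ h2]
  right_inv x := by
    have key : ∀ (v : Fin 3 → F₈) (hv : v ≠ 0),
        projCount (Projectivization.mk F₈ v hv) = normFun ⟨v, hv⟩ := fun _ _ => rfl
    classical
    rcases x with ⟨b, c⟩ | c | u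
    · rw [key]
      unfold normFun
      rw [dif_pos (show ![(1 : F₈), b, c] 0 ≠ 0 by simp)]
      simp
    · rw [key]
      unfold normFun
      rw [dif_neg (show ¬(![(0 : F₈), 1, c] 0 ≠ 0) by simp),
        dif_pos (show ![(0 : F₈), 1, c] 1 ≠ 0 by simp)]
      simp
    · rw [key]
      unfold normFun
      rw [dif_neg (show ¬(![(0 : F₈), 0, 1] 0 ≠ 0) by simp),
        dif_neg (show ¬(![(0 : F₈), 0, 1] 1 ≠ 0) by simp)]

lemma cardProjPlane : Nat.card ProjPlane = 73 := by
  rw [Nat.card_congr projEquiv]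
  have h8 : Nat.card F₈ = 8 := GaloisField.card 2 3 (by norm_num)
  show Nat.card ((F₈ × F₈) ⊕ (F₈ ⊕ PUnit)) = 73
  rw [Nat.card_sum, Nat.card_sum, Nat.card_prod, h8, Nat.card_unique]

/-- The orbits of `[1:0:0]`, `[1:η:0]`, `[1:η:η²]` under `GL(3,F₂)` acting on `ℙ²(F₈)`
have sizes `7`, `42`, `24`, and every point of `ℙ²(F₈)` lies in exactly one of them. -/
theorem GL3F2_orbit_sizes_on_P2F8 (η : F₈) (hη : η ^ 3 = η + 1)
    (p₁ p₂ p₃ : ProjPlane)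
    (hp₁ : p₁ = Projectivization.mk F₈ ![1, 0, 0] (vec_ne_zero 1 0 0 one_ne_zero))
    (hp₂ : p₂ = Projectivization.mk F₈ ![1, η, 0] (vec_ne_zero 1 η 0 one_ne_zero))
    (hp₃ : p₃ = Projectivization.mk F₈ ![1, η, η ^ 2] (vec_ne_zero 1 η (η ^ 2) one_ne_zero)) :
    Nat.card (MulAction.orbit (GL (Fin 3) F₂) p₁) = 7 ∧
    Nat.card (MulAction.orbit (GL (Fin 3) F₂) p₂) = 42 ∧
    Nat.card (MulAction.orbit (GL (Fin 3) F₂) p₃) = 24 ∧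
    ∀ q : ProjPlane, ∃! i : Fin 3,
      q ∈ MulAction.orbit (GL (Fin 3) F₂) (![p₁, p₂, p₃] i) := by
  -- orbit-stabilizer
  have os : ∀ p : ProjPlane, Nat.card (MulAction.orbit (GL (Fin 3) F₂) p) *
      Nat.card (MulAction.stabilizer (GL (Fin 3) F₂) p) = 168 := by
    intro p
    haveI : Fintype (MulAction.orbit (GL (Fin 3) F₂) p) := Fintype.ofFinite _
    haveI : Fintype (MulAction.stabilizer (GL (Fin 3) F₂) p) := Fintype.ofFinite _
    rw [Nat.card_eq_fintype_card, Nat.card_eq_fintype_card,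
      MulAction.card_orbit_mul_card_stabilizer_eq_card_group, ← Nat.card_eq_fintype_card]
    exact cardGL
  -- stabilizer cardinalities
  have s1 : Nat.card (MulAction.stabilizer (GL (Fin 3) F₂) p₁) = 24 := by
    subst hp₁
    have h : ∀ g : GL (Fin 3) F₂, g ∈ MulAction.stabilizer (GL (Fin 3) F₂)
        (Projectivization.mk F₈ ![1, 0, 0] (vec_ne_zero 1 0 0 one_ne_zero)) ↔
        (fun m : Matrix (Fin 3) (Fin 3) F₂ =>
          m 0 0 = 1 ∧ m 1 0 = 0 ∧ m 2 0 = 0) g.val := fun g => stab1_iff g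
    rw [Nat.card_congr (stabMatEquiv _ (fun m : Matrix (Fin 3) (Fin 3) F₂ =>
      m 0 0 = 1 ∧ m 1 0 = 0 ∧ m 2 0 = 0) h), Nat.card_eq_fintype_card]
    exact count1
  have s2 : Nat.card (MulAction.stabilizer (GL (Fin 3) F₂) p₂) = 4 := by
    subst hp₂
    have h : ∀ g : GL (Fin 3) F₂, g ∈ MulAction.stabilizer (GL (Fin 3) F₂)
        (Projectivization.mk F₈ ![1, η, 0] (vec_ne_zero 1 η 0 one_ne_zero)) ↔
        (fun m : Matrix (Fin 3) (Fin 3) F₂ =>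
          m 0 0 = 1 ∧ m 0 1 = 0 ∧ m 1 0 = 0 ∧ m 1 1 = 1 ∧
            m 2 0 = 0 ∧ m 2 1 = 0) g.val := fun g => stab2_iff hη g
    rw [Nat.card_congr (stabMatEquiv _ (fun m : Matrix (Fin 3) (Fin 3) F₂ =>
      m 0 0 = 1 ∧ m 0 1 = 0 ∧ m 1 0 = 0 ∧ m 1 1 = 1 ∧ m 2 0 = 0 ∧ m 2 1 = 0) h),
      Nat.card_eq_fintype_card]
    exact count2
  have s3 : Nat.card (MulAction.stabilizer (GL (Fin 3) F₂) p₃) = 7 := by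
    subst hp₃
    have h : ∀ g : GL (Fin 3) F₂, g ∈ MulAction.stabilizer (GL (Fin 3) F₂)
        (Projectivization.mk F₈ ![1, η, η ^ 2] (vec_ne_zero 1 η (η ^ 2) one_ne_zero)) ↔
        (fun m : Matrix (Fin 3) (Fin 3) F₂ =>
          m 1 0 = m 0 2 ∧ m 1 1 = m 0 0 + m 0 2 ∧ m 1 2 = m 0 1 ∧
            m 2 0 = m 0 1 ∧ m 2 1 = m 0 1 + m 0 2 ∧
            m 2 2 = m 0 0 + m 0 2) g.val := fun g => stab3_iff hη g
    rw [Nat.card_congr (stabMatEquiv _ (fun m : Matrix (Fin 3) (Fin 3) F₂ =>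
      m 1 0 = m 0 2 ∧ m 1 1 = m 0 0 + m 0 2 ∧ m 1 2 = m 0 1 ∧ m 2 0 = m 0 1 ∧
        m 2 1 = m 0 1 + m 0 2 ∧ m 2 2 = m 0 0 + m 0 2) h), Nat.card_eq_fintype_card]
    exact count3
  -- orbit cardinalities
  have o1 : Nat.card (MulAction.orbit (GL (Fin 3) F₂) p₁) = 7 := by
    have := os p₁; rw [s1] at this; omega
  have o2 : Nat.card (MulAction.orbit (GL (Fin 3) F₂) p₂) = 42 := by
    have := os p₂; rw [s2] at this; omega
  have o3 : Nat.card (MulAction.orbit (GL (Fin 3) F₂) p₃) = 24 := by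
    have := os p₃; rw [s3] at this; omega
  -- disjointness
  have hdisj : ∀ p q : ProjPlane,
      Nat.card (MulAction.orbit (GL (Fin 3) F₂) p) ≠
        Nat.card (MulAction.orbit (GL (Fin 3) F₂) q) →
      Disjoint (MulAction.orbit (GL (Fin 3) F₂) p) (MulAction.orbit (GL (Fin 3) F₂) q) := by
    intro p q hne
    rw [Set.disjoint_left]
    intro x hxp hxq
    apply hne
    rw [← MulAction.orbit_eq_iff.2 hxp, MulAction.orbit_eq_iff.2 hxq]
  have d12 := hdisj p₁ p₂ (by rw [o1, o2]; norm_num)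
  have d13 := hdisj p₁ p₃ (by rw [o1, o3]; norm_num)
  have d23 := hdisj p₂ p₃ (by rw [o2, o3]; norm_num)
  -- the union is everything
  have huniv : MulAction.orbit (GL (Fin 3) F₂) p₁ ∪ MulAction.orbit (GL (Fin 3) F₂) p₂ ∪
      MulAction.orbit (GL (Fin 3) F₂) p₃ = Set.univ := by
    apply Set.eq_of_subset_of_ncard_le (Set.subset_univ _) _ (Set.toFinite _)
    rw [Set.ncard_univ, cardProjPlane,
      Set.ncard_union_eq (by
        rw [Set.disjoint_union_left]; exact ⟨d13, d23⟩) (Set.toFinite _) (Set.toFinite _),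
      Set.ncard_union_eq d12 (Set.toFinite _) (Set.toFinite _),
      ← Nat.card_coe_set_eq, ← Nat.card_coe_set_eq, ← Nat.card_coe_set_eq,
      o1, o2, o3]
  refine ⟨o1, o2, o3, ?_⟩
  intro q
  have hq : q ∈ MulAction.orbit (GL (Fin 3) F₂) p₁ ∪ MulAction.orbit (GL (Fin 3) F₂) p₂ ∪
      MulAction.orbit (GL (Fin 3) F₂) p₃ := huniv ▸ Set.mem_univ q
  have fin3 : ∀ j : Fin 3, j = 0 ∨ j = 1 ∨ j = 2 := by decide
  rcases hq with (h | h) | h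
  · refine ⟨0, by simpa using h, ?_⟩
    intro j hj
    rcases fin3 j with rfl | rfl | rfl
    · rfl
    · simp only [Matrix.cons_val_one, Matrix.head_cons] at hj
      exact absurd hj (Set.disjoint_left.1 d12 h)
    · simp only [Matrix.cons_val_two, Matrix.tail_cons, Matrix.head_cons] at hj
      exact absurd hj (Set.disjoint_left.1 d13 h)
  · refine ⟨1, by simpa using h, ?_⟩
    intro j hj
    rcases fin3 j with rfl | rfl | rfl
    · simp only [Matrix.cons_val_zero] at hj
      exact absurd h (Set.disjoint_left.1 d12 hj)
    · rfl
    · simp only [Matrix.cons_val_two, Matrix.tail_cons, Matrix.head_cons] at hj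
      exact absurd hj (Set.disjoint_left.1 d23 h)
  · refine ⟨2, by simpa using h, ?_⟩
    intro j hj
    rcases fin3 j with rfl | rfl | rfl
    · simp only [Matrix.cons_val_zero] at hj
      exact absurd h (Set.disjoint_left.1 d13 hj)
    · simp only [Matrix.cons_val_one, Matrix.head_cons] at hj
      exact absurd h (Set.disjoint_left.1 d23 hj)
    · rfl

end
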